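/- arXiv:2503.20276 — 7 statements merged into one kernel-verified Lean document; each statement's English description precedes it below -/
import Mathlib

section
/- Let V > 0, X_d > 0, X_q > 0 and P, Q ∈ ℝ with Q + V²/X_q > 0. Define φ = arctan( P / (Q + V²/X_q) ) and V_fd = (X_d·P/V)·sin φ + (X_d·Q/V + V)·cos φ. Set V_d = V sin φ and V_q = V cos φ. Then (V_fd/X_d)·V_d + (1/X_q − 1/X_d)·V_d·V_q = P and (V_fd/X_d)·V_q − (V_d²/X_q + V_q²/X_d) = Q. That is, the stationary phase difference φ and field voltage V_fd determined by the stationary power flow variables exactly reproduce the prescribed active and reactive power through the grid-forming output equations. -/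
open Real

/-- The stationary phase difference `φ = arctan(P/(Q + V²/X_q))`
and the field voltage `V_fd = (X_d P/V) sin φ + (X_d Q/V + V) cos φ` exactly
reproduce the prescribed active and reactive powers through the grid-forming
output equations. -/
theorem vsg_stationary_values_reproduce_power_flow
    (V Xd Xq P Q : ℝ) (hV : 0 < V) (hXd : 0 < Xd) (hXq : 0 < Xq)
    (hγ : 0 < Q + V ^ 2 / Xq)
    (φ Vfd Vd Vq : ℝ)
    (hφ : φ = Real.arctan (P / (Q + V ^ 2 / Xq)))
    (hVfd : Vfd = (Xd * P / V) * Real.sin φ + (Xd * Q / V + V) * Real.cos φ)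
    (hVd : Vd = V * Real.sin φ) (hVq : Vq = V * Real.cos φ) :
    (Vfd / Xd) * Vd + (1 / Xq - 1 / Xd) * Vd * Vq = P ∧
    (Vfd / Xd) * Vq - (Vd ^ 2 / Xq + Vq ^ 2 / Xd) = Q := by
  set γ := Q + V ^ 2 / Xq with hγdef
  have htan : Real.tan φ = P / γ := by rw [hφ, Real.tan_arctan]
  have hcos : Real.cos φ ≠ 0 := by
    rw [hφ]; exact (Real.cos_arctan _).symm ▸ (by positivity)
  have hs : Real.sin φ = P / γ * Real.cos φ := by
    rw [← htan, Real.tan_eq_sin_div_cos]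
    field_simp
  have hpy : Real.sin φ ^ 2 + Real.cos φ ^ 2 = 1 := Real.sin_sq_add_cos_sq φ
  have hγ0 : γ ≠ 0 := ne_of_gt hγ
  have hQ : Q = γ - V ^ 2 / Xq := by rw [hγdef]; ring
  have hc2 : Real.cos φ ^ 2 * (P ^ 2 + γ ^ 2) = γ ^ 2 := by
    rw [hs] at hpy
    field_simp at hpy
    linarith
  subst hVfd hVd hVq
  rw [hs]
  constructor
  · rw [hQ]; field_simp
    linear_combination (Xd * Xq * P) * hc2
  · rw [hQ]; field_simp
    linear_combination (Xd * (γ * Xq - V ^ 2)) * hc2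
end

section
/- Let ω₀, M, D, τ_d, τ_q > 0, let 0 < X'_d < X_d and 0 < X'_q < X_q, and let P_m, V_fd ∈ ℝ be constants. Let δ, ω, E_q, E_d, θ, V : ℝ → ℝ be differentiable with V(t) > 0 for all t. Define V_d = V sin(δ − θ), V_q = V cos(δ − θ), I_d = (E_q − V_q)/X'_d, I_q = (V_d − E_d)/X'_q, P = V_d I_d + V_q I_q, Q = V_q I_d − V_d I_q. Assume the two-axis model equations hold: δ' = ω₀ ω, M ω' = −D ω − P + P_m, τ_d E_q' = −E_q − (X_d − X'_d) I_d + V_fd, τ_q E_d' = −E_d + (X_q − X'_q) I_q. Then the energy U(t) = ω₀ M ω²/2 + E_q²/(2(X_d − X'_d)) + E_d²/(2(X_q − X'_q)) + (V_d − E_d)²/(2 X'_q) + (E_q − V_q)²/(2 X'_d) satisfies dU/dt = −D ω₀ ω² + ω₀ ω P_m + V_fd E_q'/(X_d − X'_d) − τ_d (E_q')²/(X_d − X'_d) − τ_q (E_d')²/(X_q − X'_q) − P θ' − (Q/V) V'. -/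
open Real

set_option maxHeartbeats 1000000 in
/-- Energy dissipation identity for the two-axis synchronous
generator model. -/
theorem two_axis_energy_dissipation
    (ω₀ M D τd τq Xd Xd' Xq Xq' Pm Vfd : ℝ)
    (hω₀ : 0 < ω₀) (hM : 0 < M) (hD : 0 < D) (hτd : 0 < τd) (hτq : 0 < τq)
    (hXd' : 0 < Xd') (hXd : Xd' < Xd) (hXq' : 0 < Xq') (hXq : Xq' < Xq)
    (δ ω Eq Ed θ V : ℝ → ℝ)
    (hδ : Differentiable ℝ δ) (hω : Differentiable ℝ ω)
    (hEq : Differentiable ℝ Eq) (hEd : Differentiable ℝ Ed)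
    (hθ : Differentiable ℝ θ) (hV : Differentiable ℝ V)
    (hVpos : ∀ t, 0 < V t)
    (Vd Vq Id Iq P Q : ℝ → ℝ)
    (hVd : ∀ t, Vd t = V t * Real.sin (δ t - θ t))
    (hVq : ∀ t, Vq t = V t * Real.cos (δ t - θ t))
    (hId : ∀ t, Id t = (Eq t - Vq t) / Xd')
    (hIq : ∀ t, Iq t = (Vd t - Ed t) / Xq')
    (hP : ∀ t, P t = Vd t * Id t + Vq t * Iq t)
    (hQ : ∀ t, Q t = Vq t * Id t - Vd t * Iq t)
    -- two-axis model equations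
    (hswing1 : ∀ t, deriv δ t = ω₀ * ω t)
    (hswing2 : ∀ t, M * deriv ω t = -D * ω t - P t + Pm)
    (hEqdyn : ∀ t, τd * deriv Eq t = -Eq t - (Xd - Xd') * Id t + Vfd)
    (hEddyn : ∀ t, τq * deriv Ed t = -Ed t + (Xq - Xq') * Iq t)
    (U : ℝ → ℝ)
    (hU : ∀ t, U t = ω₀ * M * ω t ^ 2 / 2
        + Eq t ^ 2 / (2 * (Xd - Xd')) + Ed t ^ 2 / (2 * (Xq - Xq'))
        + (Vd t - Ed t) ^ 2 / (2 * Xq') + (Eq t - Vq t) ^ 2 / (2 * Xd')) :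
    ∀ t, HasDerivAt U
      (-D * ω₀ * ω t ^ 2 + ω₀ * ω t * Pm
        + Vfd * deriv Eq t / (Xd - Xd')
        - τd * (deriv Eq t) ^ 2 / (Xd - Xd')
        - τq * (deriv Ed t) ^ 2 / (Xq - Xq')
        - P t * deriv θ t - (Q t / V t) * deriv V t) t := by
  intro t
  have hVne : V t ≠ 0 := (hVpos t).ne'
  have hXd'ne : Xd' ≠ 0 := hXd'.ne'
  have hXq'ne : Xq' ≠ 0 := hXq'.ne'
  have hdd : Xd - Xd' ≠ 0 := sub_ne_zero.mpr hXd.ne'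
  have hqq : Xq - Xq' ≠ 0 := sub_ne_zero.mpr hXq.ne'
  have hδt := (hδ t).hasDerivAt
  have hωt := (hω t).hasDerivAt
  have hEqt := (hEq t).hasDerivAt
  have hEdt := (hEd t).hasDerivAt
  have hθt := (hθ t).hasDerivAt
  have hVt := (hV t).hasDerivAt
  have ha : HasDerivAt (fun s => δ s - θ s) (deriv δ t - deriv θ t) t := hδt.sub hθt
  have hVdfun : Vd = fun s => V s * Real.sin (δ s - θ s) := funext hVd
  have hVqfun : Vq = fun s => V s * Real.cos (δ s - θ s) := funext hVq
  have hVdt : HasDerivAt Vd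
      (deriv V t * Real.sin (δ t - θ t)
        + V t * (Real.cos (δ t - θ t) * (deriv δ t - deriv θ t))) t := by
    rw [hVdfun]; exact hVt.mul ha.sin
  have hVqt : HasDerivAt Vq
      (deriv V t * Real.cos (δ t - θ t)
        + V t * (-Real.sin (δ t - θ t) * (deriv δ t - deriv θ t))) t := by
    rw [hVqfun]; exact hVt.mul ha.cos
  rw [funext hU]
  have HD : HasDerivAt (fun s => ω₀ * M * ω s ^ 2 / 2
      + Eq s ^ 2 / (2 * (Xd - Xd')) + Ed s ^ 2 / (2 * (Xq - Xq'))
      + (Vd s - Ed s) ^ 2 / (2 * Xq') + (Eq s - Vq s) ^ 2 / (2 * Xd'))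
      (ω₀ * M * (2 * ω t ^ 1 * deriv ω t) / 2
        + (2 * Eq t ^ 1 * deriv Eq t) / (2 * (Xd - Xd'))
        + (2 * Ed t ^ 1 * deriv Ed t) / (2 * (Xq - Xq'))
        + (2 * (Vd t - Ed t) ^ 1 *
            ((deriv V t * Real.sin (δ t - θ t)
              + V t * (Real.cos (δ t - θ t) * (deriv δ t - deriv θ t))) - deriv Ed t)) / (2 * Xq')
        + (2 * (Eq t - Vq t) ^ 1 *
            (deriv Eq t - (deriv V t * Real.cos (δ t - θ t)
              + V t * (-Real.sin (δ t - θ t) * (deriv δ t - deriv θ t))))) / (2 * Xd')) t := by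
    exact (((((hωt.pow 2).const_mul (ω₀ * M)).div_const 2).add
      ((hEqt.pow 2).div_const (2 * (Xd - Xd')))).add
      ((hEdt.pow 2).div_const (2 * (Xq - Xq')))).add
      (((hVdt.sub hEdt).pow 2).div_const (2 * Xq')) |>.add
      (((hEqt.sub hVqt).pow 2).div_const (2 * Xd'))
  convert HD using 1
  set A := deriv V t * Real.sin (δ t - θ t)
      + V t * (Real.cos (δ t - θ t) * (deriv δ t - deriv θ t)) with hA
  set B := deriv V t * Real.cos (δ t - θ t)
      + V t * (-Real.sin (δ t - θ t) * (deriv δ t - deriv θ t)) with hB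
  have h1 : ω₀ * M * (2 * ω t ^ 1 * deriv ω t) / 2
      = ω₀ * ω t * (-D * ω t - P t + Pm) := by
    linear_combination (ω₀ * ω t) * hswing2 t
  have hEqval : Eq t = Vfd - τd * deriv Eq t - (Xd - Xd') * Id t := by
    linarith [hEqdyn t]
  have h2 : (2 * Eq t ^ 1 * deriv Eq t) / (2 * (Xd - Xd'))
      = (Vfd * deriv Eq t - τd * (deriv Eq t) ^ 2) / (Xd - Xd') - Id t * deriv Eq t := by
    rw [pow_one, hEqval]; field_simp
  have hEdval : Ed t = (Xq - Xq') * Iq t - τq * deriv Ed t := by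
    linarith [hEddyn t]
  have h3 : (2 * Ed t ^ 1 * deriv Ed t) / (2 * (Xq - Xq'))
      = -(τq * (deriv Ed t) ^ 2) / (Xq - Xq') + Iq t * deriv Ed t := by
    rw [pow_one, hEdval]; field_simp; ring
  have hVdE : Vd t - Ed t = Xq' * Iq t := by
    rw [hIq t]; field_simp
  have h4 : (2 * (Vd t - Ed t) ^ 1 * (A - deriv Ed t)) / (2 * Xq')
      = Iq t * (A - deriv Ed t) := by
    rw [pow_one, hVdE]; field_simp
  have hEqV : Eq t - Vq t = Xd' * Id t := by
    rw [hId t]; field_simp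
  have h5 : (2 * (Eq t - Vq t) ^ 1 * (deriv Eq t - B)) / (2 * Xd')
      = Id t * (deriv Eq t - B) := by
    rw [pow_one, hEqV]; field_simp
  have h6 : Iq t * A - Id t * B
      = -(Q t / V t) * deriv V t + (deriv δ t - deriv θ t) * P t := by
    rw [hP t, hQ t, hVd t, hVq t, hA, hB]
    field_simp
    ring
  linear_combination -h1 - h2 - h3 - h4 - h5 - h6 - P t * hswing1 t
end

section
/- Let ω₀, M, D > 0, X_d > 0, X_q > 0, and let P_m, V_fd ∈ ℝ be constants. Let δ, ω, θ, V : ℝ → ℝ be differentiable with V(t) > 0 for all t. Define V_d = V sin(δ − θ), V_q = V cos(δ − θ), P = (V_fd/X_d) V_d + (1/X_q − 1/X_d) V_d V_q, Q = (V_fd/X_d) V_q − (V_d²/X_q + V_q²/X_d). Assume δ' = ω₀ ω and M ω' = −D ω − P + P_m. Then U(t) = ω₀ M ω²/2 + V_d²/(2 X_q) + (V_fd − V_q)²/(2 X_d) satisfies dU/dt = −D ω₀ ω² + ω₀ ω P_m − P θ' − (Q/V) V'. -/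
open Real

/-- Energy dissipation identity for the virtual synchronous
generator (VSG) model. -/
theorem vsg_energy_dissipation
    (ω₀ M D Xd Xq Pm Vfd : ℝ)
    (hω₀ : 0 < ω₀) (hM : 0 < M) (hD : 0 < D) (hXd : 0 < Xd) (hXq : 0 < Xq)
    (δ ω θ V : ℝ → ℝ)
    (hδ : Differentiable ℝ δ) (hω : Differentiable ℝ ω)
    (hθ : Differentiable ℝ θ) (hV : Differentiable ℝ V)
    (hVpos : ∀ t, 0 < V t)
    (Vd Vq P Q : ℝ → ℝ)
    (hVd : ∀ t, Vd t = V t * Real.sin (δ t - θ t))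
    (hVq : ∀ t, Vq t = V t * Real.cos (δ t - θ t))
    (hP : ∀ t, P t = (Vfd / Xd) * Vd t + (1 / Xq - 1 / Xd) * Vd t * Vq t)
    (hQ : ∀ t, Q t = (Vfd / Xd) * Vq t - (Vd t ^ 2 / Xq + Vq t ^ 2 / Xd))
    (hswing1 : ∀ t, deriv δ t = ω₀ * ω t)
    (hswing2 : ∀ t, M * deriv ω t = -D * ω t - P t + Pm)
    (U : ℝ → ℝ)
    (hU : ∀ t, U t = ω₀ * M * ω t ^ 2 / 2
        + Vd t ^ 2 / (2 * Xq) + (Vfd - Vq t) ^ 2 / (2 * Xd)) :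
    ∀ t, HasDerivAt U
      (-D * ω₀ * ω t ^ 2 + ω₀ * ω t * Pm
        - P t * deriv θ t - (Q t / V t) * deriv V t) t := by

  have hUeq : U = fun t => ω₀ * M * ω t ^ 2 / 2
      + (V t * Real.sin (δ t - θ t)) ^ 2 / (2 * Xq)
      + (Vfd - V t * Real.cos (δ t - θ t)) ^ 2 / (2 * Xd) := by
    funext t; rw [hU t, hVd t, hVq t]
  intro t
  have hδ' := (hδ t).hasDerivAt
  have hω' := (hω t).hasDerivAt
  have hθ' := (hθ t).hasDerivAt
  have hV' := (hV t).hasDerivAt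
  have hs := hδ'.sub hθ'
  have h1 := ((hω'.pow 2).const_mul (ω₀ * M)).div_const 2
  have h2 := ((hV'.mul hs.sin).pow 2).div_const (2 * Xq)
  have h3 := (((hasDerivAt_const t Vfd).sub (hV'.mul hs.cos)).pow 2).div_const (2 * Xd)
  rw [hUeq]
  convert (h1.add h2).add h3 using 1
  case e'_4 => rfl
  case e'_5 => rfl
  case e'_8 => rfl
  have hω2 : deriv ω t = (-D * ω t - P t + Pm) / M := by
    field_simp
    linarith [hswing2 t]
  rw [hω2, hP t, hQ t, hVd t, hVq t, hswing1 t]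
  have hVne := (hVpos t).ne'
  simp only [Pi.mul_apply, Pi.sub_apply]
  field_simp
  ring
end

section
/- Let ω₀, D > 0, X_d > 0, X_q > 0, and let P_m, V_fd ∈ ℝ be constants. Let δ, θ, V : ℝ → ℝ be differentiable with V(t) > 0 for all t. Define V_d = V sin(δ − θ), V_q = V cos(δ − θ), P = (V_fd/X_d) V_d + (1/X_q − 1/X_d) V_d V_q, Q = (V_fd/X_d) V_q − (V_d²/X_q + V_q²/X_d). Assume D δ' = ω₀ (−P + P_m). Then U(t) = V_d²/(2 X_q) + (V_fd − V_q)²/(2 X_d) satisfies dU/dt = −(D/ω₀) (δ')² + P_m δ' − P θ' − (Q/V) V'. -/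
open Real

/-- Energy dissipation identity for the frequency droop control
(FDC) grid-forming inverter model. -/
theorem fdc_energy_dissipation
    (ω₀ D Xd Xq Pm Vfd : ℝ)
    (hω₀ : 0 < ω₀) (hD : 0 < D) (hXd : 0 < Xd) (hXq : 0 < Xq)
    (δ θ V : ℝ → ℝ)
    (hδ : Differentiable ℝ δ) (hθ : Differentiable ℝ θ)
    (hV : Differentiable ℝ V) (hVpos : ∀ t, 0 < V t)
    (Vd Vq P Q : ℝ → ℝ)
    (hVd : ∀ t, Vd t = V t * Real.sin (δ t - θ t))
    (hVq : ∀ t, Vq t = V t * Real.cos (δ t - θ t))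
    (hP : ∀ t, P t = (Vfd / Xd) * Vd t + (1 / Xq - 1 / Xd) * Vd t * Vq t)
    (hQ : ∀ t, Q t = (Vfd / Xd) * Vq t - (Vd t ^ 2 / Xq + Vq t ^ 2 / Xd))
    (hdroop : ∀ t, D * deriv δ t = ω₀ * (-P t + Pm))
    (U : ℝ → ℝ)
    (hU : ∀ t, U t = Vd t ^ 2 / (2 * Xq) + (Vfd - Vq t) ^ 2 / (2 * Xd)) :
    ∀ t, HasDerivAt U
      (-(D / ω₀) * (deriv δ t) ^ 2 + Pm * deriv δ t
        - P t * deriv θ t - (Q t / V t) * deriv V t) t := by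
  intro t
  have ha : HasDerivAt (fun t => δ t - θ t) (deriv δ t - deriv θ t) t :=
    ((hδ t).hasDerivAt).sub ((hθ t).hasDerivAt)
  have hVt : HasDerivAt V (deriv V t) t := (hV t).hasDerivAt
  have hs : HasDerivAt (fun t => Real.sin (δ t - θ t))
      (Real.cos (δ t - θ t) * (deriv δ t - deriv θ t)) t :=
    (Real.hasDerivAt_sin _).comp t ha
  have hc : HasDerivAt (fun t => Real.cos (δ t - θ t))
      (-Real.sin (δ t - θ t) * (deriv δ t - deriv θ t)) t :=
    (Real.hasDerivAt_cos _).comp t ha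
  have hVd' : HasDerivAt (fun t => V t * Real.sin (δ t - θ t))
      (deriv V t * Real.sin (δ t - θ t) +
        V t * (Real.cos (δ t - θ t) * (deriv δ t - deriv θ t))) t := hVt.mul hs
  have hVq' : HasDerivAt (fun t => V t * Real.cos (δ t - θ t))
      (deriv V t * Real.cos (δ t - θ t) +
        V t * (-Real.sin (δ t - θ t) * (deriv δ t - deriv θ t))) t := hVt.mul hc
  have hUfun : U = fun t => (V t * Real.sin (δ t - θ t)) ^ 2 / (2 * Xq) +
      (Vfd - V t * Real.cos (δ t - θ t)) ^ 2 / (2 * Xd) := by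
    funext x; rw [hU x, hVd x, hVq x]
  rw [hUfun]
  have h1 : HasDerivAt (fun t => (V t * Real.sin (δ t - θ t)) ^ 2 / (2 * Xq) +
      (Vfd - V t * Real.cos (δ t - θ t)) ^ 2 / (2 * Xd))
      ((2 * (V t * Real.sin (δ t - θ t)) ^ 1 *
        (deriv V t * Real.sin (δ t - θ t) +
          V t * (Real.cos (δ t - θ t) * (deriv δ t - deriv θ t)))) / (2 * Xq) +
       (2 * (Vfd - V t * Real.cos (δ t - θ t)) ^ 1 *
        (0 - (deriv V t * Real.cos (δ t - θ t) +
          V t * (-Real.sin (δ t - θ t) * (deriv δ t - deriv θ t))))) / (2 * Xd)) t :=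
    ((hVd'.pow 2).div_const _).add ((((hasDerivAt_const t Vfd).sub hVq').pow 2).div_const _)
  convert h1 using 1
  have hd := hdroop t
  have hP' := hP t
  have hQ' := hQ t
  rw [hP', hVd t, hVq t] at hd
  rw [hP', hQ', hVd t, hVq t]
  have hVne : V t ≠ 0 := (hVpos t).ne'
  field_simp
  field_simp at hd
  linear_combination (-deriv δ t) * hd
end

section
/- Let X_d > 0, X_q > 0, V_fd ∈ ℝ, and define U : ℝ × ℝ × (0,∞) → ℝ by U(δ, θ, V) = V² sin²(δ−θ)/(2 X_q) + (V_fd − V cos(δ−θ))²/(2 X_d). Write V_d = V sin(δ−θ), V_q = V cos(δ−θ), P = (V_fd/X_d)V_d + (1/X_q − 1/X_d)V_d V_q, Q = (V_fd/X_d)V_q − (V_d²/X_q + V_q²/X_d), a = V_q²/X_q + V_d²/X_d + Q, and b = (1/V)(P + (1/X_q − 1/X_d)V_d V_q). Then the Hessian of U at (δ, θ, V), in the variable ordering (δ, θ, V), equals the symmetric 3×3 matrix [[a, −a, b], [−a, a, −b], [b, −b, (1/V²)(V_d²/X_q + V_q²/X_d)]]. -/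
set_option maxHeartbeats 1000000

open Real Matrix

private lemma vsg_line1 (Xd Xq Vfd p0 p2 u0 u2 : ℝ) :
    HasDerivAt (fun t => (p2 + t*u2)^2 * Real.sin (p0 + t*u0)^2/(2*Xq)
        + (Vfd - (p2 + t*u2)*Real.cos (p0 + t*u0))^2/(2*Xd))
      (p2*u2*Real.sin p0^2/Xq + p2^2*(Real.sin p0*Real.cos p0)*u0/Xq
        + (Vfd - p2*Real.cos p0)*(p2*Real.sin p0*u0 - u2*Real.cos p0)/Xd) 0 := by
  have h0 : HasDerivAt (fun t : ℝ => p0 + t*u0) u0 0 := by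
    simpa using ((hasDerivAt_id (0:ℝ)).mul_const u0).const_add p0
  have h2 : HasDerivAt (fun t : ℝ => p2 + t*u2) u2 0 := by
    simpa using ((hasDerivAt_id (0:ℝ)).mul_const u2).const_add p2
  have hs := h0.sin
  have hc := h0.cos
  have H := (((h2.pow 2).mul (hs.pow 2)).div_const (2*Xq)).add
    ((((h2.mul hc).const_sub Vfd).pow 2).div_const (2*Xd))
  convert H using 1
  · rfl
  · rfl
  · rfl
  simp only [zero_mul, add_zero, Pi.pow_apply, Pi.mul_apply, Pi.sub_apply]
  ring

private lemma vsg_line2 (Xd Xq Vfd p0 p2 u0 u2 v0 v2 : ℝ) :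
    HasDerivAt (fun s =>
        (p2 + s*v2)*u2*Real.sin (p0 + s*v0)^2/Xq
        + (p2 + s*v2)^2*(Real.sin (p0 + s*v0)*Real.cos (p0 + s*v0))*u0/Xq
        + (Vfd - (p2 + s*v2)*Real.cos (p0 + s*v0))
            *((p2 + s*v2)*Real.sin (p0 + s*v0)*u0 - u2*Real.cos (p0 + s*v0))/Xd)
      (v2*u2*Real.sin p0^2/Xq + 2*p2*u2*Real.sin p0*Real.cos p0*v0/Xq
        + 2*p2*v2*Real.sin p0*Real.cos p0*u0/Xq
        + p2^2*(Real.cos p0^2 - Real.sin p0^2)*v0*u0/Xq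
        + (p2*Real.sin p0*v0 - v2*Real.cos p0)*(p2*Real.sin p0*u0 - u2*Real.cos p0)/Xd
        + (Vfd - p2*Real.cos p0)
            *(v2*Real.sin p0*u0 + p2*Real.cos p0*v0*u0 + u2*Real.sin p0*v0)/Xd) 0 := by
  have h0 : HasDerivAt (fun s : ℝ => p0 + s*v0) v0 0 := by
    simpa using ((hasDerivAt_id (0:ℝ)).mul_const v0).const_add p0
  have h2 : HasDerivAt (fun s : ℝ => p2 + s*v2) v2 0 := by
    simpa using ((hasDerivAt_id (0:ℝ)).mul_const v2).const_add p2
  have hs := h0.sin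
  have hc := h0.cos
  have H := ((((h2.mul_const u2).mul (hs.pow 2)).div_const Xq).add
      ((((h2.pow 2).mul (hs.mul hc)).mul_const u0).div_const Xq)).add
    ((((h2.mul hc).const_sub Vfd).mul
        (((h2.mul hs).mul_const u0).sub (hc.const_mul u2))).div_const Xd)
  convert H using 1
  · rfl
  · rfl
  · rfl
  simp only [zero_mul, add_zero, Pi.pow_apply, Pi.mul_apply, Pi.sub_apply]
  ring

private lemma vsg_dd (Xd Xq Vfd : ℝ) (δ θ V : ℝ)
    (U : (Fin 3 → ℝ) → ℝ)
    (hU : ∀ x : Fin 3 → ℝ, U x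
      = (x 2) ^ 2 * Real.sin (x 0 - x 1) ^ 2 / (2 * Xq)
        + (Vfd - x 2 * Real.cos (x 0 - x 1)) ^ 2 / (2 * Xd))
    (c d : Fin 3 → ℝ) :
    deriv (fun s : ℝ => deriv (fun t : ℝ => U
        (fun k => ![δ, θ, V] k + t * c k + s * d k)) 0) 0
    = (d 2)*(c 2)*Real.sin (δ-θ)^2/Xq
      + 2*V*(c 2)*Real.sin (δ-θ)*Real.cos (δ-θ)*(d 0 - d 1)/Xq
      + 2*V*(d 2)*Real.sin (δ-θ)*Real.cos (δ-θ)*(c 0 - c 1)/Xq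
      + V^2*(Real.cos (δ-θ)^2 - Real.sin (δ-θ)^2)*(d 0 - d 1)*(c 0 - c 1)/Xq
      + (V*Real.sin (δ-θ)*(d 0 - d 1) - (d 2)*Real.cos (δ-θ))
          *(V*Real.sin (δ-θ)*(c 0 - c 1) - (c 2)*Real.cos (δ-θ))/Xd
      + (Vfd - V*Real.cos (δ-θ))
          *((d 2)*Real.sin (δ-θ)*(c 0 - c 1) + V*Real.cos (δ-θ)*(d 0 - d 1)*(c 0 - c 1)
            + (c 2)*Real.sin (δ-θ)*(d 0 - d 1))/Xd := by
  have hinner : ∀ s : ℝ, deriv (fun t : ℝ => U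
      (fun k => ![δ, θ, V] k + t * c k + s * d k)) 0
      = (fun s : ℝ =>
        (V + s*(d 2))*(c 2)*Real.sin ((δ-θ) + s*(d 0 - d 1))^2/Xq
        + (V + s*(d 2))^2*(Real.sin ((δ-θ) + s*(d 0 - d 1))*Real.cos ((δ-θ) + s*(d 0 - d 1)))*(c 0 - c 1)/Xq
        + (Vfd - (V + s*(d 2))*Real.cos ((δ-θ) + s*(d 0 - d 1)))
            *((V + s*(d 2))*Real.sin ((δ-θ) + s*(d 0 - d 1))*(c 0 - c 1)
              - (c 2)*Real.cos ((δ-θ) + s*(d 0 - d 1)))/Xd) s := by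
    intro s
    beta_reduce
    have h1 := vsg_line1 Xd Xq Vfd ((δ-θ) + s*(d 0 - d 1)) (V + s*(d 2)) (c 0 - c 1) (c 2)
    rw [← h1.deriv]
    congr 1
    funext t
    rw [hU]
    simp only [Matrix.cons_val_zero, Matrix.cons_val_one, Matrix.head_cons,
      Matrix.cons_val_two, Matrix.tail_cons]
    ring_nf
  rw [funext hinner]
  have h2 := vsg_line2 Xd Xq Vfd (δ-θ) V (c 0 - c 1) (c 2) (d 0 - d 1) (d 2)
  rw [h2.deriv]

/-- The Hessian of the VSG energy function
`U(δ,θ,V) = V² sin²(δ−θ)/(2X_q) + (V_fd − V cos(δ−θ))²/(2X_d)` in the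
variable ordering `(δ, θ, V)` equals the explicit symmetric 3×3 matrix
`[[a, −a, b], [−a, a, −b], [b, −b, (1/V²)(V_d²/X_q + V_q²/X_d)]]`. -/
theorem vsg_energy_hessian
    (Xd Xq Vfd : ℝ) (hXd : 0 < Xd) (hXq : 0 < Xq)
    (U : (Fin 3 → ℝ) → ℝ)
    (hU : ∀ x : Fin 3 → ℝ, U x
      = (x 2) ^ 2 * Real.sin (x 0 - x 1) ^ 2 / (2 * Xq)
        + (Vfd - x 2 * Real.cos (x 0 - x 1)) ^ 2 / (2 * Xd))
    (δ θ V : ℝ) (hV : 0 < V)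
    (Vd Vq P Q a b : ℝ)
    (hVd : Vd = V * Real.sin (δ - θ)) (hVq : Vq = V * Real.cos (δ - θ))
    (hP : P = (Vfd / Xd) * Vd + (1 / Xq - 1 / Xd) * Vd * Vq)
    (hQ : Q = (Vfd / Xd) * Vq - (Vd ^ 2 / Xq + Vq ^ 2 / Xd))
    (ha : a = Vq ^ 2 / Xq + Vd ^ 2 / Xd + Q)
    (hb : b = (1 / V) * (P + (1 / Xq - 1 / Xd) * Vd * Vq)) :
    ∀ i j : Fin 3,
      deriv (fun s : ℝ => deriv (fun t : ℝ => U
          (fun k => ![δ, θ, V] k + t * (if k = i then 1 else 0)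
                        + s * (if k = j then 1 else 0))) 0) 0
        = !![a, -a, b; -a, a, -b; b, -b, (1 / V ^ 2) * (Vd ^ 2 / Xq + Vq ^ 2 / Xd)] i j := by
  intro i j
  subst hVd hVq hP hQ ha hb
  have key := vsg_dd Xd Xq Vfd δ θ V U hU
    (fun k => if k = i then 1 else 0) (fun k => if k = j then 1 else 0)
  rw [key]
  have hXd' := hXd.ne'
  have hXq' := hXq.ne'
  have hV' := hV.ne'
  fin_cases i <;> fin_cases j <;>
    simp <;> field_simp <;> ring
end

section
/- Let V > 0, X_d > 0, X_q > 0, P, Q ∈ ℝ and φ ∈ ℝ, and suppose γ := Q + V² cos²φ / X_q + V² sin²φ / X_d is nonzero. Set β = (1/V)(P + (1/X_q − 1/X_d) V² sin φ cos φ) and α = sin²φ / X_q + cos²φ / X_d. Then the Schur complement of the symmetric 3×3 matrix [[γ, −γ, β], [−γ, γ, −β], [β, −β, α]] with respect to its (1,1) entry γ equals the 2×2 matrix diag(0, g), where g = [ V⁴/(X_q X_d) − P² + (V² cos²φ / X_d + V² sin²φ / X_q) Q − 2 (1/X_q − 1/X_d) P V² cos φ sin φ ] / (V² γ). In particular the Schur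 complement equals the matrix Γ(V, P, Q; X_d, X_q) of the paper's stability condition. -/
open Real Matrix

/-- The Schur complement of the reduced 3×3 Hessian
`[[γ, −γ, β], [−γ, γ, −β], [β, −β, α]]` with respect to its `(1,1)` entry `γ`
equals `diag(0, g) = Γ(V,P,Q;X_d,X_q)`, the matrix of the paper's stability
condition. -/
theorem schur_complement_equals_Gamma
    (V Xd Xq P Q φ : ℝ) (hV : 0 < V) (hXd : 0 < Xd) (hXq : 0 < Xq)
    (γ β α g : ℝ)
    (hγdef : γ = Q + V ^ 2 * Real.cos φ ^ 2 / Xq + V ^ 2 * Real.sin φ ^ 2 / Xd)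
    (hγ : γ ≠ 0)
    (hβ : β = (1 / V) * (P + (1 / Xq - 1 / Xd) * V ^ 2 * Real.sin φ * Real.cos φ))
    (hα : α = Real.sin φ ^ 2 / Xq + Real.cos φ ^ 2 / Xd)
    (hg : g = (V ^ 4 / (Xq * Xd) - P ^ 2
        + (V ^ 2 * Real.cos φ ^ 2 / Xd + V ^ 2 * Real.sin φ ^ 2 / Xq) * Q
        - 2 * (1 / Xq - 1 / Xd) * P * V ^ 2 * Real.cos φ * Real.sin φ)
        / (V ^ 2 * γ))
    (M : Matrix (Fin 3) (Fin 3) ℝ)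
    (hM : M = !![γ, -γ, β; -γ, γ, -β; β, -β, α])
    (S : Matrix (Fin 2) (Fin 2) ℝ)
    (hS : ∀ i j : Fin 2, S i j
      = M i.succ j.succ - M i.succ 0 * M 0 j.succ / γ) :
    S = !![0, 0; 0, g] := by
  have hsc : Real.sin φ ^ 2 + Real.cos φ ^ 2 = 1 := Real.sin_sq_add_cos_sq φ
  have hV' : V ≠ 0 := hV.ne'
  have hXd' : Xd ≠ 0 := hXd.ne'
  have hXq' : Xq ≠ 0 := hXq.ne'
  ext i j
  fin_cases i <;> fin_cases j <;>
    simp only [hS, hM, Fin.succ] <;>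
    simp [Matrix.cons_val_zero, Matrix.cons_val_one] <;>
    field_simp
  all_goals try ring1
  · have hgγ : g * γ = (V ^ 4 / (Xq * Xd) - P ^ 2
        + (V ^ 2 * Real.cos φ ^ 2 / Xd + V ^ 2 * Real.sin φ ^ 2 / Xq) * Q
        - 2 * (1 / Xq - 1 / Xd) * P * V ^ 2 * Real.cos φ * Real.sin φ) / V ^ 2 := by
      rw [hg]; field_simp
    rw [mul_comm γ g, hgγ, hα, hβ, hγdef]
    field_simp
    ring_nf
    linear_combination ((Xd * Xq * V ^ 4) * (Real.sin φ ^ 2 + Real.cos φ ^ 2 + 1)) * hsc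
end

section
/- Let N ≥ 1, let B ∈ ℝ^{N×N} be symmetric with −B positive semidefinite, and for each i let V_i > 0, X_{qi} > 0, X_{di} > 0 and φ_i, θ_i ∈ ℝ. Define the 2×2 matrices Φ_i = [[V_i cos φ_i, −sin φ_i], [V_i sin φ_i, cos φ_i]] and Θ_i = [[−V_i sin θ_i, cos θ_i], [V_i cos θ_i, sin θ_i]], and the 2N×2N matrices D_Φ = blockdiag(Φ_1, …, Φ_N), D_Θ = blockdiag(Θ_1, …, Θ_N), Λ = blockdiag( diag(1/X_{q1}, 1/X_{d1}), …, diag(1/X_{qN}, 1/X_{dN}) ). Then the matrix H_vv = D_Φᵀ Λ D_Φ + D_Θᵀ (−B ⊗ I₂) D_Θ is positive definite, where −B ⊗ I₂ denotes the Kronecker product replacing each entry −B_ij by −B_ij · I₂. -/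
open Real Matrix Kronecker

/-- The `(θ,V)`-block of the total Hessian,
`H_vv = D_Φᵀ Λ D_Φ + D_Θᵀ (−B ⊗ I₂) D_Θ`, is positive definite whenever `B`
is symmetric with `−B` positive semidefinite, `V_i > 0`, `X_{qi} > 0`,
`X_{di} > 0`. -/
theorem Hvv_pos_def
    (N : ℕ) (hN : 1 ≤ N) (B : Matrix (Fin N) (Fin N) ℝ)
    (hBsym : B.IsSymm) (hBpsd : (-B).PosSemidef)
    (V Xq Xd φ θ : Fin N → ℝ)
    (hV : ∀ i, 0 < V i) (hXq : ∀ i, 0 < Xq i) (hXd : ∀ i, 0 < Xd i)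
    (Φ Θ : Fin N → Matrix (Fin 2) (Fin 2) ℝ)
    (hΦ : ∀ i, Φ i = !![V i * Real.cos (φ i), -Real.sin (φ i);
                        V i * Real.sin (φ i), Real.cos (φ i)])
    (hΘ : ∀ i, Θ i = !![-V i * Real.sin (θ i), Real.cos (θ i);
                        V i * Real.cos (θ i), Real.sin (θ i)])
    (DΦ DΘ Λ : Matrix (Fin N × Fin 2) (Fin N × Fin 2) ℝ)
    (hDΦ : ∀ p q : Fin N × Fin 2,
      DΦ p q = if p.1 = q.1 then Φ p.1 p.2 q.2 else 0)
    (hDΘ : ∀ p q : Fin N × Fin 2,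
      DΘ p q = if p.1 = q.1 then Θ p.1 p.2 q.2 else 0)
    (hΛ : Λ = Matrix.diagonal
      (fun p : Fin N × Fin 2 => if p.2 = 0 then 1 / Xq p.1 else 1 / Xd p.1)) :
    (DΦᵀ * Λ * DΦ + DΘᵀ * ((-B) ⊗ₖ (1 : Matrix (Fin 2) (Fin 2) ℝ)) * DΘ).PosDef := by
  have hΛpd : Λ.PosDef := by
    rw [hΛ]
    exact Matrix.PosDef.diagonal fun p => by
      rcases eq_or_ne p.2 0 with h | h <;> simp [h, hXq p.1, hXd p.1]
  -- the first term is positive definite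
  have h1pd : (DΦᵀ * Λ * DΦ).PosDef := by
    have hinj : ∀ x : Fin N × Fin 2 → ℝ, x ≠ 0 → DΦ *ᵥ x ≠ 0 := by
      intro x hx h0
      apply hx
      funext p
      obtain ⟨i, l⟩ := p
      have h1 : (DΦ *ᵥ x) (i, 0) = 0 := by rw [h0]; rfl
      have h2 : (DΦ *ᵥ x) (i, 1) = 0 := by rw [h0]; rfl
      have e : ∀ k : Fin 2, (DΦ *ᵥ x) (i, k) =
          Φ i k 0 * x (i, 0) + Φ i k 1 * x (i, 1) := by
        intro k
        simp only [mulVec, dotProduct, Fintype.sum_prod_type, hDΦ, ite_mul, zero_mul,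
          Finset.sum_add_distrib, Finset.sum_ite_eq, Finset.mem_univ, if_true,
          Fin.sum_univ_two]
      rw [e 0] at h1; rw [e 1] at h2
      rw [hΦ i] at h1 h2
      simp [Matrix.cons_val_zero, Matrix.cons_val_one] at h1 h2
      have hs := Real.sin_sq_add_cos_sq (φ i)
      have hVi := hV i
      have haV : V i * x (i, 0) = 0 := by
        linear_combination Real.cos (φ i) * h1 + Real.sin (φ i) * h2 - V i * x (i, 0) * hs
      have ha : x (i, 0) = 0 := by
        rcases mul_eq_zero.mp haV with h | h
        · exact absurd h hVi.ne'
        · exact h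
      have hb : x (i, 1) = 0 := by
        linear_combination -Real.sin (φ i) * h1 + Real.cos (φ i) * h2 - x (i, 1) * hs
      fin_cases l
      · exact ha
      · exact hb
    refine Matrix.PosDef.of_dotProduct_mulVec_pos ?_ ?_
    · show _ = _
      have : (DΦᵀ * Λ * DΦ)ᴴ = (DΦᵀ * Λ * DΦ)ᵀ := rfl
      rw [this, transpose_mul, transpose_mul, transpose_transpose, hΛ, diagonal_transpose,
        Matrix.mul_assoc]
    · intro x hx
      have key : star x ⬝ᵥ ((DΦᵀ * Λ * DΦ) *ᵥ x)
          = star (DΦ *ᵥ x) ⬝ᵥ (Λ *ᵥ (DΦ *ᵥ x)) := by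
        rw [star_trivial, star_trivial, ← mulVec_mulVec, ← mulVec_mulVec,
          Matrix.dotProduct_mulVec, Matrix.vecMul_transpose]
      rw [key]
      exact hΛpd.dotProduct_mulVec_pos (hinj x hx)
  -- the second term is positive semidefinite
  have hKpsd : ((-B) ⊗ₖ (1 : Matrix (Fin 2) (Fin 2) ℝ)).PosSemidef := by
    refine Matrix.PosSemidef.of_dotProduct_mulVec_nonneg ?_ ?_
    · show _ = _
      ext ⟨i, k⟩ ⟨j, l⟩
      simp [conjTranspose_apply, kroneckerMap_apply, Matrix.one_apply, hBsym.apply, eq_comm]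
    · intro x
      have key : (star x) ⬝ᵥ (((-B) ⊗ₖ (1 : Matrix (Fin 2) (Fin 2) ℝ)) *ᵥ x)
          = ∑ k : Fin 2, (fun j => x (j, k)) ⬝ᵥ ((-B) *ᵥ fun j => x (j, k)) := by
        simp only [star_trivial, dotProduct, mulVec, kroneckerMap_apply, Fintype.sum_prod_type,
          Matrix.one_apply, mul_ite, mul_one, mul_zero, ite_mul, zero_mul,
          Finset.sum_ite_eq, Finset.mem_univ, if_true]
        rw [Finset.sum_comm]
      rw [key]
      exact Finset.sum_nonneg fun k _ => by simpa using hBpsd.dotProduct_mulVec_nonneg (fun j => x (j, k))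
  have h2psd : (DΘᵀ * ((-B) ⊗ₖ (1 : Matrix (Fin 2) (Fin 2) ℝ)) * DΘ).PosSemidef := by
    have : DΘᴴ = DΘᵀ := rfl
    rw [← this]
    exact hKpsd.conjTranspose_mul_mul_same DΘ
  exact h1pd.add_posSemidef h2psd
end
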